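/- Let (X₁,d₁) and (X₂,d₂) be ultrametric spaces with X₁ ∩ X₂ = A nonempty and compact, and suppose d₁ and d₂ agree on A × A. Then there exists an ultrametric d on X₁ ∪ X₂ whose restriction to X₁ equals d₁ and whose restriction to X₂ equals d₂. -/

import Mathlib

section Glue

set_option linter.unusedSectionVars false

variable {A X1 X2 : Type} [MetricSpace A] [MetricSpace X1] [MetricSpace X2]

/-- The glued distance on the disjoint sum. -/
noncomputable def glueD (f : A → X1) (g : A → X2) : X1 ⊕ X2 → X1 ⊕ X2 → ℝ
  | .inl x, .inl y => dist x y
  | .inl x, .inr y => ⨅ a : A, max (dist x (f a)) (dist (g a) y)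
  | .inr x, .inl y => ⨅ a : A, max (dist y (f a)) (dist (g a) x)
  | .inr x, .inr y => dist x y

variable [CompactSpace A] [Nonempty A] {f : A → X1} {g : A → X2}

lemma glueD_cross_le (x : X1) (y : X2) (a : A) :
    glueD f g (.inl x) (.inr y) ≤ max (dist x (f a)) (dist (g a) y) := by
  refine ciInf_le ⟨0, ?_⟩ a
  rintro r ⟨b, rfl⟩
  exact le_max_of_le_left dist_nonneg

lemma glueD_cross_attained (hf : Isometry f) (hg : Isometry g) (x : X1) (y : X2) :
    ∃ a : A, glueD f g (.inl x) (.inr y) = max (dist x (f a)) (dist (g a) y) := by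
  have hc : Continuous fun a : A => max (dist x (f a)) (dist (g a) y) :=
    (continuous_const.dist hf.continuous).max (hg.continuous.dist continuous_const)
  obtain ⟨a, -, ha⟩ := isCompact_univ.exists_isMinOn Set.univ_nonempty hc.continuousOn
  exact ⟨a, le_antisymm (glueD_cross_le x y a) (le_ciInf fun b => ha (Set.mem_univ b))⟩

lemma glueD_nonneg (p q : X1 ⊕ X2) : 0 ≤ glueD f g p q := by
  rcases p with x | x <;> rcases q with y | y
  · exact dist_nonneg
  · exact Real.iInf_nonneg fun a => le_max_of_le_left dist_nonneg
  · exact Real.iInf_nonneg fun a => le_max_of_le_left dist_nonneg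
  · exact dist_nonneg

lemma glueD_comm (p q : X1 ⊕ X2) : glueD f g p q = glueD f g q p := by
  rcases p with x | x <;> rcases q with y | y
  · exact dist_comm x y
  · rfl
  · rfl
  · exact dist_comm x y

lemma glueD_self (p : X1 ⊕ X2) : glueD f g p p = 0 := by
  rcases p with x | x <;> exact dist_self x

variable [IsUltrametricDist X1] [IsUltrametricDist X2]

lemma glueD_ultra (hf : Isometry f) (hg : Isometry g) (p q r : X1 ⊕ X2) :
    glueD f g p r ≤ max (glueD f g p q) (glueD f g q r) := by
  have key : ∀ (x : X1) (y : X2) (a : A),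
      glueD f g (.inl x) (.inr y) ≤ max (dist x (f a)) (dist (g a) y) := glueD_cross_le
  rcases p with x | x <;> rcases q with v | v <;> rcases r with y | y
  · exact IsUltrametricDist.dist_triangle_max x v y
  · -- inl x, inl v, inr y
    obtain ⟨b, hb⟩ := glueD_cross_attained hf hg v y
    refine (key x y b).trans ?_
    show _ ≤ max (dist x v) (glueD f g (.inl v) (.inr y))
    rw [hb]
    have h2 : dist x (f b) ≤ max (dist x v) (dist v (f b)) :=
      IsUltrametricDist.dist_triangle_max x v (f b)
    exact max_le (h2.trans (max_le_max_left _ (le_max_left _ _)))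
      (le_max_of_le_right (le_max_right _ _))
  · -- inl x, inr v, inl y
    obtain ⟨a, ha⟩ := glueD_cross_attained hf hg x v
    obtain ⟨b, hb⟩ := glueD_cross_attained hf hg y v
    show dist x y ≤ max (glueD f g (.inl x) (.inr v)) (glueD f g (.inl y) (.inr v))
    rw [ha, hb]
    have h1 : dist x y ≤ max (dist x (f a)) (max (dist (f a) (f b)) (dist (f b) y)) :=
      (IsUltrametricDist.dist_triangle_max x (f a) y).trans
        (max_le_max_left _ (IsUltrametricDist.dist_triangle_max (f a) (f b) y))
    have h2 : dist (f a) (f b) ≤ max (dist (g a) v) (dist v (g b)) := by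
      rw [hf.dist_eq, ← hg.dist_eq]
      exact IsUltrametricDist.dist_triangle_max (g a) v (g b)
    refine h1.trans (max_le (le_max_of_le_left (le_max_left _ _)) (max_le ?_ ?_))
    · refine h2.trans (max_le (le_max_of_le_left (le_max_right _ _)) ?_)
      rw [dist_comm]
      exact le_max_of_le_right (le_max_right _ _)
    · rw [dist_comm]
      exact le_max_of_le_right (le_max_left _ _)
  · -- inl x, inr v, inr y
    obtain ⟨b, hb⟩ := glueD_cross_attained hf hg x v
    refine (key x y b).trans ?_
    show _ ≤ max (glueD f g (.inl x) (.inr v)) (dist v y)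
    rw [hb]
    have h2 : dist (g b) y ≤ max (dist (g b) v) (dist v y) :=
      IsUltrametricDist.dist_triangle_max (g b) v y
    exact max_le (le_max_of_le_left (le_max_left _ _))
      (h2.trans (max_le_max_right _ (le_max_right _ _)))
  · -- inr x, inl v, inl y
    obtain ⟨b, hb⟩ := glueD_cross_attained hf hg v x
    show glueD f g (.inl y) (.inr x) ≤ max (glueD f g (.inl v) (.inr x)) (dist v y)
    refine (key y x b).trans ?_
    rw [hb]
    have h2 : dist y (f b) ≤ max (dist y v) (dist v (f b)) :=
      IsUltrametricDist.dist_triangle_max y v (f b)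
    refine max_le (h2.trans (max_le ?_ (le_max_of_le_left (le_max_left _ _))))
      (le_max_of_le_left (le_max_right _ _))
    rw [dist_comm]
    exact le_max_right _ _
  · -- inr x, inl v, inr y
    obtain ⟨a, ha⟩ := glueD_cross_attained hf hg v x
    obtain ⟨b, hb⟩ := glueD_cross_attained hf hg v y
    show dist x y ≤ max (glueD f g (.inl v) (.inr x)) (glueD f g (.inl v) (.inr y))
    rw [ha, hb]
    have h1 : dist x y ≤ max (dist x (g a)) (max (dist (g a) (g b)) (dist (g b) y)) :=
      (IsUltrametricDist.dist_triangle_max x (g a) y).trans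
        (max_le_max_left _ (IsUltrametricDist.dist_triangle_max (g a) (g b) y))
    have h2 : dist (g a) (g b) ≤ max (dist (f a) v) (dist v (f b)) := by
      rw [hg.dist_eq, ← hf.dist_eq]
      exact IsUltrametricDist.dist_triangle_max (f a) v (f b)
    refine h1.trans (max_le ?_ (max_le (h2.trans (max_le ?_ ?_)) ?_))
    · rw [dist_comm]
      exact le_max_of_le_left (le_max_right _ _)
    · rw [dist_comm]
      exact le_max_of_le_left (le_max_left _ _)
    · exact le_max_of_le_right (le_max_left _ _)
    · exact le_max_of_le_right (le_max_right _ _)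
  · -- inr x, inr v, inl y
    obtain ⟨b, hb⟩ := glueD_cross_attained hf hg y v
    show glueD f g (.inl y) (.inr x) ≤ max (dist x v) (glueD f g (.inl y) (.inr v))
    refine (key y x b).trans ?_
    rw [hb]
    have h2 : dist (g b) x ≤ max (dist (g b) v) (dist v x) :=
      IsUltrametricDist.dist_triangle_max (g b) v x
    refine max_le (le_max_of_le_right (le_max_left _ _))
      (h2.trans (max_le (le_max_of_le_right (le_max_right _ _)) ?_))
    rw [dist_comm]
    exact le_max_left _ _
  · exact IsUltrametricDist.dist_triangle_max x v y

lemma glueD_cross_eq_zero (hf : Isometry f) (hg : Isometry g) {x : X1} {y : X2}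
    (h : glueD f g (.inl x) (.inr y) = 0) : ∃ a : A, x = f a ∧ y = g a := by
  obtain ⟨a, ha⟩ := glueD_cross_attained hf hg x y
  rw [h] at ha
  have h1 : dist x (f a) = 0 :=
    le_antisymm ((le_max_left _ _).trans ha.symm.le) dist_nonneg
  have h2 : dist (g a) y = 0 :=
    le_antisymm ((le_max_right _ _).trans ha.symm.le) dist_nonneg
  exact ⟨a, eq_of_dist_eq_zero h1, (eq_of_dist_eq_zero h2).symm⟩

end Glue


/-- Type synonym for the sum, to carry the glued metric without instance clashes. -/
def GlueSum (X1 X2 : Type) : Type := X1 ⊕ X2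

/-- Two ultrametric spaces sharing a common nonempty compact part `A` can be glued:
there is an ultrametric space `Z` containing isometric copies of `X₁` and `X₂`
which agree exactly on the copy of `A`, and `Z = X₁ ∪ X₂`. -/
theorem ultrametric_amalgam_exists (A X1 X2 : Type) [MetricSpace A] [MetricSpace X1]
    [MetricSpace X2] [CompactSpace A] [Nonempty A]
    [IsUltrametricDist X1] [IsUltrametricDist X2]
    (f : A → X1) (g : A → X2) (hf : Isometry f) (hg : Isometry g) :
    ∃ (Z : Type) (_ : MetricSpace Z), IsUltrametricDist Z ∧
      ∃ (i : X1 → Z) (j : X2 → Z), Isometry i ∧ Isometry j ∧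
        (∀ a : A, i (f a) = j (g a)) ∧
        Set.range i ∪ Set.range j = Set.univ ∧
        Set.range i ∩ Set.range j = Set.range (fun a : A => i (f a)) := by
  letI P : PseudoMetricSpace (GlueSum X1 X2) :=
    { dist := fun p q => glueD f g p q
      dist_self := glueD_self
      dist_comm := glueD_comm
      dist_triangle := fun p q r => (glueD_ultra hf hg p q r).trans
        (max_le (le_add_of_nonneg_right (glueD_nonneg q r))
          (le_add_of_nonneg_left (glueD_nonneg p q))) }
  have hdist : ∀ p q : GlueSum X1 X2, dist p q = glueD f g p q := fun _ _ => rfl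
  refine ⟨SeparationQuotient (GlueSum X1 X2), inferInstance, ⟨fun p q r => ?_⟩,
    fun x => SeparationQuotient.mk (Sum.inl x : GlueSum X1 X2),
    fun y => SeparationQuotient.mk (Sum.inr y : GlueSum X1 X2),
    Isometry.of_dist_eq fun _ _ => rfl, Isometry.of_dist_eq fun _ _ => rfl, ?_, ?_, ?_⟩
  · obtain ⟨p, rfl⟩ := SeparationQuotient.surjective_mk p
    obtain ⟨q, rfl⟩ := SeparationQuotient.surjective_mk q
    obtain ⟨r, rfl⟩ := SeparationQuotient.surjective_mk r
    simpa only [SeparationQuotient.dist_mk, hdist] using glueD_ultra hf hg p q r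
  · intro a
    refine SeparationQuotient.mk_eq_mk.2 (Metric.inseparable_iff.2 ?_)
    refine le_antisymm ?_ (glueD_nonneg _ _)
    change glueD f g _ _ ≤ 0
    simpa using glueD_cross_le (f := f) (g := g) (f a) (g a) a
  · ext z
    simp only [Set.mem_union, Set.mem_range, Set.mem_univ, iff_true]
    obtain ⟨p, rfl⟩ := SeparationQuotient.surjective_mk z
    rcases p with x | y
    · exact Or.inl ⟨x, rfl⟩
    · exact Or.inr ⟨y, rfl⟩
  · ext z
    constructor
    · rintro ⟨⟨x, rfl⟩, ⟨y, hy⟩⟩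
      have h0 : glueD f g (.inl x) (.inr y) = 0 := by
        have := Metric.inseparable_iff.1 (SeparationQuotient.mk_eq_mk.1 hy.symm)
        change glueD f g _ _ = 0 at this
        rw [glueD_comm]
        exact this
      obtain ⟨a, rfl, -⟩ := glueD_cross_eq_zero hf hg h0
      exact ⟨a, rfl⟩
    · rintro ⟨a, rfl⟩
      refine ⟨⟨f a, rfl⟩, ⟨g a, ?_⟩⟩
      refine (SeparationQuotient.mk_eq_mk.2 (Metric.inseparable_iff.2 ?_)).symm
      refine le_antisymm ?_ (glueD_nonneg _ _)
      change glueD f g _ _ ≤ 0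
      simpa using glueD_cross_le (f := f) (g := g) (f a) (g a) a
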